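/- Let 0 < k ≤ n be integers, let r = min(binom(n,k−1), binom(n,k)), and let p be a prime with p ≤ min(k, n−k+1). Then p divides the determinant of every r × r square submatrix of the incidence matrix 𝒜_{n,k,k−1}; equivalently, p divides the greatest common divisor of the nonzero maximal minors of 𝒜_{n,k,k−1}, and hence p divides the normalized Euclidean volume of every full-dimensional simplex whose vertices are columns of 𝒜_{n,k,k−1}. -/

import Mathlib

/-- The incidence matrix `𝒜_{n,k,t}`. -/
def incMat (R : Type*) [Zero R] [One R] (n k t : ℕ) :
    Matrix {T : Finset (Fin n) // T.card = t} {K : Finset (Fin n) // K.card = k} R :=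
  fun T K => if T.1 ⊆ K.1 then 1 else 0

open Finset Matrix

section RankHelpers

variable {F : Type*} [Field F]

lemma auxRankLt {m l : Type*} [Fintype m] [Fintype l] (A : Matrix m l F)
    {v : l → F} (hv : v ≠ 0) (hAv : A.mulVec v = 0) : A.rank < Fintype.card l := by
  have hker : v ∈ LinearMap.ker A.mulVecLin := by
    simpa [Matrix.mulVecLin_apply] using hAv
  have hnt : Nontrivial (LinearMap.ker A.mulVecLin) :=
    ⟨⟨v, hker⟩, 0, by simpa [Subtype.ext_iff] using hv⟩
  have h1 : 0 < Module.finrank F (LinearMap.ker A.mulVecLin) :=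
    Module.finrank_pos_iff.mpr hnt
  have h2 := LinearMap.finrank_range_add_finrank_ker A.mulVecLin
  rw [Module.finrank_fintype_fun_eq_card] at h2
  rw [Matrix.rank]
  omega

lemma auxRankCols {m l o : Type*} [Fintype m] [Fintype l] [Fintype o]
    (A : Matrix m l F) (g : o → l) : (A.submatrix id g).rank ≤ A.rank := by
  rw [Matrix.rank_eq_finrank_span_cols, Matrix.rank_eq_finrank_span_cols]
  apply Submodule.finrank_mono
  apply Submodule.span_mono
  rintro x ⟨j, rfl⟩
  exact ⟨g j, rfl⟩

lemma auxRankSub {m l o o' : Type*} [Fintype m] [Fintype l] [Fintype o] [Fintype o']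
    (A : Matrix m l F) (f : o → m) (g : o' → l) : (A.submatrix f g).rank ≤ A.rank := by
  have h1 : A.submatrix f g = (A.submatrix f id).submatrix id g := by
    ext i j; rfl
  rw [h1]
  refine le_trans (auxRankCols _ g) ?_
  have h2 : A.submatrix f id = (Aᵀ.submatrix id f)ᵀ := by ext i j; rfl
  rw [h2, Matrix.rank_transpose, ← Matrix.rank_transpose A]
  exact auxRankCols _ f

end RankHelpers

section CardHelpers

variable {n : ℕ}

/-- Count of `k`-sets containing `T` and disjoint from `B'`, when `T` is disjoint from `B'`. -/
lemma auxCardRight {k : ℕ} (hk : 0 < k) (B' T : Finset (Fin n))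
    (hT : T.card = k - 1) (hdisj : Disjoint T B') :
    ((Finset.powersetCard k (univ : Finset (Fin n))).filter
        (fun s => T ⊆ s ∧ Disjoint s B')).card = ((T ∪ B')ᶜ).card := by
  symm
  apply Finset.card_nbij (fun x => insert x T)
  · intro x hx
    simp only [Finset.mem_coe, Finset.mem_compl, Finset.mem_union, not_or] at hx
    simp only [Finset.mem_coe, Finset.mem_filter, Finset.mem_powersetCard_univ]
    refine ⟨?_, Finset.subset_insert _ _, ?_⟩
    · rw [Finset.card_insert_of_notMem hx.1, hT]
      omega
    · rw [Finset.disjoint_left]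
      intro a ha
      rcases Finset.mem_insert.mp ha with h | h
      · subst h; exact hx.2
      · exact Finset.disjoint_left.mp hdisj h
  · intro x hx y hy hxy
    simp only [Finset.coe_compl, Set.mem_compl_iff, Finset.mem_coe, Finset.mem_union,
      not_or] at hx hy
    change insert x T = insert y T at hxy
    have : x ∈ insert y T := hxy ▸ Finset.mem_insert_self x T
    rcases Finset.mem_insert.mp this with h | h
    · exact h
    · exact absurd h hx.1
  · intro s hs
    simp only [Finset.coe_filter, Set.mem_setOf_eq, Finset.mem_powersetCard_univ] at hs
    obtain ⟨hcard, hTs, hdis⟩ := hs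
    have hlt : T.card < s.card := by omega
    obtain ⟨x, hxs, hxT⟩ : ∃ x ∈ s, x ∉ T := by
      by_contra h
      push_neg at h
      exact absurd (Finset.card_le_card h) (by omega)
    refine ⟨x, ?_, ?_⟩
    · simp only [Finset.coe_compl, Set.mem_compl_iff, Finset.mem_coe, Finset.mem_union, not_or]
      exact ⟨hxT, Finset.disjoint_left.mp hdis hxs⟩
    · have hsub : insert x T ⊆ s := Finset.insert_subset hxs hTs
      have hcard' : s.card ≤ (insert x T).card := by
        rw [Finset.card_insert_of_notMem hxT, hT]; omega
      show insert x T = s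
      exact Finset.eq_of_subset_of_card_le hsub hcard'

/-- Count of `(k-1)`-sets `t` with `B ⊆ t ⊆ K`, when `B ⊆ K`. -/
lemma auxCardLeft {k : ℕ} (hk : 0 < k) (B K : Finset (Fin n))
    (hK : K.card = k) (hB : B ⊆ K) :
    ((Finset.powersetCard (k - 1) (univ : Finset (Fin n))).filter
        (fun t => t ⊆ K ∧ B ⊆ t)).card = (K \ B).card := by
  symm
  apply Finset.card_nbij (fun x => K.erase x)
  · intro x hx
    simp only [Finset.mem_coe, Finset.mem_sdiff] at hx
    simp only [Finset.mem_coe, Finset.mem_filter, Finset.mem_powersetCard_univ]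
    refine ⟨?_, Finset.erase_subset _ _, ?_⟩
    · rw [Finset.card_erase_of_mem hx.1, hK]
    · intro a ha
      exact Finset.mem_erase.mpr ⟨fun h => hx.2 (h ▸ ha), hB ha⟩
  · intro x hx y hy hxy
    simp only [Finset.coe_sdiff, Set.mem_diff, Finset.mem_coe] at hx hy
    change K.erase x = K.erase y at hxy
    by_contra hne
    have : x ∈ K.erase y := Finset.mem_erase.mpr ⟨hne, hx.1⟩
    rw [← hxy] at this
    exact (Finset.mem_erase.mp this).1 rfl
  · intro t ht
    simp only [Finset.coe_filter, Set.mem_setOf_eq, Finset.mem_powersetCard_univ] at ht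
    obtain ⟨hcard, htK, hBt⟩ := ht
    have hlt : t.card < K.card := by omega
    obtain ⟨x, hxK, hxt⟩ : ∃ x ∈ K, x ∉ t := by
      by_contra h
      push_neg at h
      exact absurd (Finset.card_le_card h) (by omega)
    refine ⟨x, ?_, ?_⟩
    · simp only [Finset.coe_sdiff, Set.mem_diff, Finset.mem_coe]
      exact ⟨hxK, fun h => hxt (hBt h)⟩
    · have hsub : t ⊆ K.erase x := fun a ha =>
        Finset.mem_erase.mpr ⟨fun h => hxt (h ▸ ha), htK ha⟩
      show K.erase x = t
      symm
      apply Finset.eq_of_subset_of_card_le hsub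
      rw [Finset.card_erase_of_mem hxK, hK, hcard]

end CardHelpers

/-- Let `0 < k ≤ n`, `r = min(binom(n,k−1), binom(n,k))`, and let `p` be a prime with
`p ≤ min(k, n−k+1)`. Then `p` divides the determinant of every `r × r` square
submatrix of the incidence matrix `𝒜_{n,k,k−1}`. -/
theorem stmt_10 (n k : ℕ) (hk : 0 < k) (hkn : k ≤ n)
    (p : ℕ) (hp : p.Prime) (hple : p ≤ min k (n - k + 1))
    (r : ℕ) (hr : r = min (n.choose (k - 1)) (n.choose k))
    (f : Fin r → {T : Finset (Fin n) // T.card = k - 1})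
    (g : Fin r → {K : Finset (Fin n) // K.card = k})
    (hf : Function.Injective f) (hg : Function.Injective g) :
    (p : ℤ) ∣ ((incMat ℤ n k (k - 1)).submatrix f g).det := by
  haveI : Fact p.Prime := ⟨hp⟩
  have hpk : p ≤ k := le_trans hple (min_le_left _ _)
  have hpn : p ≤ n - k + 1 := le_trans hple (min_le_right _ _)
  have hp1 : 1 ≤ p := hp.one_lt.le.trans' (by omega)
  set F := ZMod p
  set M : Matrix {T : Finset (Fin n) // T.card = k - 1} {K : Finset (Fin n) // K.card = k} F :=
    incMat F n k (k - 1) with hM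
  -- reduce to vanishing over `ZMod p`
  rw [← ZMod.intCast_zmod_eq_zero_iff_dvd]
  have hmap : ((incMat ℤ n k (k - 1)).submatrix f g).map (Int.cast : ℤ → F)
      = M.submatrix f g := by
    ext i j
    simp [hM, incMat, Matrix.submatrix, Matrix.map, apply_ite (Int.cast : ℤ → F)]
  have hdet : ((((incMat ℤ n k (k - 1)).submatrix f g).det : ℤ) : F)
      = (M.submatrix f g).det := by
    rw [← hmap]
    simpa [RingHom.mapMatrix_apply] using
      (RingHom.map_det (Int.castRingHom F) ((incMat ℤ n k (k - 1)).submatrix f g))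
  rw [hdet]
  -- it suffices to show the rank of `M` is `< r`
  by_contra hdet0
  have hunit : IsUnit (M.submatrix f g) :=
    (Matrix.isUnit_iff_isUnit_det _).mpr (isUnit_iff_ne_zero.mpr hdet0)
  have hrankr : (M.submatrix f g).rank = r := by
    rw [Matrix.rank_of_isUnit _ hunit, Fintype.card_fin]
  have hle : (M.submatrix f g).rank ≤ M.rank := auxRankSub M f g
  -- right kernel vector: indicator of `k`-sets disjoint from `B'`
  obtain ⟨B', _, hB'card⟩ : ∃ B' ⊆ (univ : Finset (Fin n)), B'.card = n - k + 1 - p :=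
    Finset.exists_subset_card_eq (by simp; omega)
  set v : {K : Finset (Fin n) // K.card = k} → F :=
    fun K => if Disjoint K.1 B' then 1 else 0 with hv
  have hMv : M.mulVec v = 0 := by
    funext T
    have hTcard := T.2
    show (∑ K : {K : Finset (Fin n) // K.card = k}, M T K * v K) = 0
    have : (∑ K : {K : Finset (Fin n) // K.card = k}, M T K * v K)
        = ∑ s ∈ Finset.powersetCard k (univ : Finset (Fin n)),
            (if T.1 ⊆ s ∧ Disjoint s B' then (1 : F) else 0) := by
      rw [Finset.sum_subtype (Finset.powersetCard k (univ : Finset (Fin n)))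
        (fun s => Finset.mem_powersetCard_univ) ]
      apply Finset.sum_congr rfl
      intro K _
      rw [hM]
      by_cases h1 : T.1 ⊆ K.1 <;> by_cases h2 : Disjoint K.1 B' <;>
        simp [incMat, hv, h1, h2]
    rw [this, Finset.sum_boole]
    by_cases hd : Disjoint T.1 B'
    · rw [auxCardRight hk B' T.1 hTcard hd]
      have hcomp : ((T.1 ∪ B')ᶜ).card = p := by
        rw [Finset.card_compl, Finset.card_union_of_disjoint hd, hTcard, hB'card]
        simp only [Fintype.card_fin]
        omega
      rw [hcomp, ZMod.natCast_self]
    · have : ((Finset.powersetCard k (univ : Finset (Fin n))).filter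
          (fun s => T.1 ⊆ s ∧ Disjoint s B')).card = 0 := by
        rw [Finset.card_eq_zero, Finset.filter_eq_empty_iff]
        rintro s _ ⟨hTs, hsB⟩
        exact hd (Finset.disjoint_of_subset_left hTs hsB)
      rw [this]
      simp
  have hvne : v ≠ 0 := by
    obtain ⟨K₀, hK₀sub, hK₀card⟩ : ∃ K₀ ⊆ B'ᶜ, K₀.card = k := by
      apply Finset.exists_subset_card_eq
      rw [Finset.card_compl, hB'card]
      simp only [Fintype.card_fin]
      omega
    have hd : Disjoint K₀ B' := Finset.disjoint_left.mpr fun a ha =>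
      Finset.mem_compl.mp (hK₀sub ha)
    intro h0
    have := congrFun h0 ⟨K₀, hK₀card⟩
    rw [hv] at this
    simp only [if_pos hd, Pi.zero_apply] at this
    exact one_ne_zero this
  have hrank1 : M.rank < n.choose k := by
    have := auxRankLt M hvne hMv
    rwa [Fintype.card_finset_len, Fintype.card_fin] at this
  -- left kernel vector: indicator of `(k-1)`-sets containing `B`
  obtain ⟨B, _, hBcard⟩ : ∃ B ⊆ (univ : Finset (Fin n)), B.card = k - p :=
    Finset.exists_subset_card_eq (by simp; omega)
  set w : {T : Finset (Fin n) // T.card = k - 1} → F :=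
    fun T => if B ⊆ T.1 then 1 else 0 with hw
  have hMw : Mᵀ.mulVec w = 0 := by
    funext K
    have hKcard := K.2
    show (∑ T : {T : Finset (Fin n) // T.card = k - 1}, Mᵀ K T * w T) = 0
    have : (∑ T : {T : Finset (Fin n) // T.card = k - 1}, Mᵀ K T * w T)
        = ∑ t ∈ Finset.powersetCard (k - 1) (univ : Finset (Fin n)),
            (if t ⊆ K.1 ∧ B ⊆ t then (1 : F) else 0) := by
      rw [Finset.sum_subtype (Finset.powersetCard (k - 1) (univ : Finset (Fin n)))
        (fun s => Finset.mem_powersetCard_univ) ]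
      apply Finset.sum_congr rfl
      intro T _
      rw [hM]
      by_cases h1 : T.1 ⊆ K.1 <;> by_cases h2 : B ⊆ T.1 <;>
        simp [incMat, hw, h1, h2]
    rw [this, Finset.sum_boole]
    by_cases hB : B ⊆ K.1
    · rw [auxCardLeft hk B K.1 hKcard hB]
      have hsd : (K.1 \ B).card = p := by
        rw [Finset.card_sdiff_of_subset hB, hKcard, hBcard]
        omega
      rw [hsd, ZMod.natCast_self]
    · have : ((Finset.powersetCard (k - 1) (univ : Finset (Fin n))).filter
          (fun t => t ⊆ K.1 ∧ B ⊆ t)).card = 0 := by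
        rw [Finset.card_eq_zero, Finset.filter_eq_empty_iff]
        rintro t _ ⟨htK, hBt⟩
        exact hB (hBt.trans htK)
      rw [this]
      simp
  have hwne : w ≠ 0 := by
    obtain ⟨T₀, hT₀sup, hT₀card⟩ : ∃ T₀, B ⊆ T₀ ∧ T₀.card = k - 1 := by
      apply Finset.exists_superset_card_eq (by omega)
      simp only [Fintype.card_fin]
      omega
    intro h0
    have := congrFun h0 ⟨T₀, hT₀card⟩
    rw [hw] at this
    simp only [if_pos hT₀sup, Pi.zero_apply] at this
    exact one_ne_zero this
  have hrank2 : M.rank < n.choose (k - 1) := by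
    have := auxRankLt Mᵀ hwne hMw
    rwa [Fintype.card_finset_len, Fintype.card_fin, Matrix.rank_transpose] at this
  omega
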